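/- Fix λ ∈ ℝ. One has ⟨B̃_λ(u,v), v⟩_{H̃} = 0 for all u ∈ Ṽ, v ∈ H̃ and for all v ∈ Ṽ, u ∈ H̃; moreover ⟨B̃_λ(u,v), w⟩_{H̃} = −⟨B̃_λ(u,w), v⟩_{H̃} for all u ∈ Ṽ and v, w ∈ H̃, and for all v, w ∈ Ṽ and u ∈ H̃. -/

import Mathlib

open ComplexConjugate

noncomputable section

/-- Extension of a sequence `(u_n)_{n ≥ 1}` to integer indices, with the boundary
convention `u_m = 0` for `m ≤ 0` (in particular `u_0 = u_{-1} = 0`). -/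
def ext (u : ℕ → ℂ) : ℤ → ℂ := fun m => if 1 ≤ m then u m.toNat else 0

/-- Wave numbers `k_n = k₀ 2^n`. -/
def kseq (k₀ : ℝ) (n : ℤ) : ℝ := k₀ * 2 ^ n

/-- The GOY bilinear operator. -/
def goyB (k₀ : ℝ) (u v : ℕ → ℂ) : ℕ → ℂ := fun n =>
  Complex.I * (kseq k₀ n) *
    ( (1/4 : ℂ) * conj (ext v ((n : ℤ) - 1)) * conj (ext u ((n : ℤ) + 1))
      - (1/2 : ℂ) * (conj (ext u ((n : ℤ) + 1)) * conj (ext v ((n : ℤ) + 2))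
          + conj (ext v ((n : ℤ) + 1)) * conj (ext u ((n : ℤ) + 2)))
      + (1/8 : ℂ) * conj (ext u ((n : ℤ) - 1)) * conj (ext v ((n : ℤ) - 2)) )

/-- Membership in `H`: square-summability over `n ≥ 1`. -/
def memH (u : ℕ → ℂ) : Prop := Summable (fun n : ℕ => ‖u (n + 1)‖ ^ 2)

/-- The `H`-norm `|u|_H = (∑_{n ≥ 1} |u_n|²)^{1/2}`. -/
def normH (u : ℕ → ℂ) : ℝ := Real.sqrt (∑' n : ℕ, ‖u (n + 1)‖ ^ 2)

/-- Membership in `V`: `u ∈ H` and `∑_{n ≥ 1} k_n² |u_n|² < ∞`. -/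
def memV (k₀ : ℝ) (u : ℕ → ℂ) : Prop :=
  memH u ∧ Summable (fun n : ℕ => (kseq k₀ (n + 1)) ^ 2 * ‖u (n + 1)‖ ^ 2)

/-- The `V`-norm `‖u‖_V = (∑_{n ≥ 1} k_n² |u_n|²)^{1/2}`. -/
def normV (k₀ : ℝ) (u : ℕ → ℂ) : ℝ :=
  Real.sqrt (∑' n : ℕ, (kseq k₀ (n + 1)) ^ 2 * ‖u (n + 1)‖ ^ 2)

/-- Membership in `H̃ = H × H`. -/
def memHt (x : (ℕ → ℂ) × (ℕ → ℂ)) : Prop := memH x.1 ∧ memH x.2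

/-- The `H̃`-norm: `|x|_{H̃}² = |x₁|_H² + |x₂|_H²`. -/
def normHt (x : (ℕ → ℂ) × (ℕ → ℂ)) : ℝ :=
  Real.sqrt ((∑' n : ℕ, ‖x.1 (n + 1)‖ ^ 2) + (∑' n : ℕ, ‖x.2 (n + 1)‖ ^ 2))

/-- Membership in `Ṽ = V × V`. -/
def memVt (k₀ : ℝ) (x : (ℕ → ℂ) × (ℕ → ℂ)) : Prop := memV k₀ x.1 ∧ memV k₀ x.2

/-- The `Ṽ`-norm: `‖x‖_{Ṽ}² = ‖x₁‖_V² + ‖x₂‖_V²`. -/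
def normVt (k₀ : ℝ) (x : (ℕ → ℂ) × (ℕ → ℂ)) : ℝ :=
  Real.sqrt ((∑' n : ℕ, (kseq k₀ (n + 1)) ^ 2 * ‖x.1 (n + 1)‖ ^ 2)
    + (∑' n : ℕ, (kseq k₀ (n + 1)) ^ 2 * ‖x.2 (n + 1)‖ ^ 2))

/-- The coupled bilinear operator
`B̃_λ(x,y) = (B(x₁,y₁) + λ B(x₂,y₁), B(x₁,y₂) + λ B(x₂,y₂))`. -/
def Btilde (k₀ lam : ℝ) (x y : (ℕ → ℂ) × (ℕ → ℂ)) : (ℕ → ℂ) × (ℕ → ℂ) :=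
  (fun n => goyB k₀ x.1 y.1 n + (lam : ℂ) * goyB k₀ x.2 y.1 n,
   fun n => goyB k₀ x.1 y.2 n + (lam : ℂ) * goyB k₀ x.2 y.2 n)

/-- The real inner product of `H`: `⟨u,v⟩_H = Re ∑_{n ≥ 1} u_n conj(v_n)`. -/
def innerH (u v : ℕ → ℂ) : ℝ := ∑' n : ℕ, (u (n + 1) * conj (v (n + 1))).re

/-- The inner product of `H̃`: `⟨x,y⟩_{H̃} = ⟨x₁,y₁⟩_H + ⟨x₂,y₂⟩_H`. -/
def innerHt (x y : (ℕ → ℂ) × (ℕ → ℂ)) : ℝ := innerH x.1 y.1 + innerH x.2 y.2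


set_option maxHeartbeats 1000000

namespace GOYAux

lemma ext_nonpos (u : ℕ → ℂ) {m : ℤ} (hm : m ≤ 0) : ext u m = 0 := by
  simp [ext, show ¬ (1 ≤ m) by omega]

lemma extNat (u : ℕ → ℂ) (n : ℕ) : ext u ((n:ℤ)+1) = u (n+1) := by
  simp [ext, show (1:ℤ) ≤ (n:ℤ)+1 by omega]

lemma kseq_pos' {k₀ : ℝ} (hk₀ : 0 < k₀) (m : ℤ) : 0 < kseq k₀ m := by
  unfold kseq; positivity

lemma kseq_le {k₀ : ℝ} (hk₀ : 0 < k₀) {d : ℤ} (hd : -2 ≤ d) (m : ℤ) :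
    kseq k₀ m ≤ 4 * kseq k₀ (m + d) := by
  unfold kseq
  rw [zpow_add₀ (by norm_num : (2:ℝ) ≠ 0)]
  have h2 : (1:ℝ) ≤ (2:ℝ)^(d+2) := by
    calc (1:ℝ) = 2^(0:ℤ) := by norm_num
    _ ≤ 2^(d+2) := zpow_le_zpow_right₀ (by norm_num) (by omega)
  have h3 : (2:ℝ)^(d+2) = 2^d * 4 := by
    rw [zpow_add₀ (by norm_num : (2:ℝ) ≠ 0)]; norm_num
  have hp : (0:ℝ) < 2^m := by positivity
  nlinarith [hp, hk₀, mul_pos hk₀ hp]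

lemma kseq_shift (k₀ : ℝ) (m d : ℤ) : kseq k₀ (m + d) = kseq k₀ m * 2^d := by
  unfold kseq; rw [zpow_add₀ (by norm_num : (2:ℝ) ≠ 0)]; ring

lemma summable_int_iff (f : ℤ → ℝ) (h0 : ∀ m : ℤ, m ≤ 0 → f m = 0) :
    Summable (fun n : ℕ => f ((n:ℤ)+1)) ↔ Summable f := by
  have hinj : Function.Injective (fun n : ℕ => (n:ℤ)+1) := by
    intro a b h; simpa using h
  have hsupp : ∀ x ∉ Set.range (fun n : ℕ => (n:ℤ)+1), f x = 0 := by
    intro x hx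
    apply h0
    by_contra h
    exact hx ⟨(x-1).toNat, by show ((x-1).toNat:ℤ)+1 = x; omega⟩
  exact hinj.summable_iff hsupp

lemma tsum_int_eq (f : ℤ → ℝ) (h0 : ∀ m : ℤ, m ≤ 0 → f m = 0) :
    ∑' n : ℕ, f ((n:ℤ)+1) = ∑' m : ℤ, f m := by
  have hinj : Function.Injective (fun n : ℕ => (n:ℤ)+1) := by
    intro a b h; simpa using h
  refine hinj.tsum_eq ?_
  intro x hx
  simp only [Function.mem_support, ne_eq] at hx
  by_contra h
  exact hx (h0 x (by
    by_contra h1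
    exact h ⟨(x-1).toNat, by show ((x-1).toNat:ℤ)+1 = x; omega⟩))

lemma summable_shift (f : ℤ → ℝ) (d : ℤ) (hf : Summable f) :
    Summable (fun m : ℤ => f (m + d)) := by
  exact hf.comp_injective (add_left_injective d)

lemma tsum_shift' (f : ℤ → ℝ) (d : ℤ) : ∑' m : ℤ, f (m + d) = ∑' m : ℤ, f m := by
  exact (Equiv.addRight d).tsum_eq f

lemma summable_mul_shift (s t : ℤ → ℝ) (hs : Summable fun m => s m ^ 2)
    (ht : Summable fun m => t m ^ 2) (d : ℤ) :
    Summable (fun m : ℤ => s (m + d) * t m) := by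
  have hs' : Summable (fun m : ℤ => s (m+d)^2) := summable_shift _ d hs
  have hsum : Summable (fun m : ℤ => (s (m+d)^2 + t m ^2)/2) := (hs'.add ht).div_const 2
  apply Summable.of_norm_bounded hsum
  intro m
  have := two_mul_le_add_sq (|s (m+d)|) (|t m|)
  rw [Real.norm_eq_abs, abs_mul]
  simp only [sq_abs] at this
  linarith

lemma memH_summable_int {u : ℕ → ℂ} (hu : memH u) :
    Summable fun m : ℤ => ‖ext u m‖^2 := by
  rw [← summable_int_iff _ (fun m hm => by rw [ext_nonpos u hm]; simp)]
  apply hu.congr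
  intro n
  rw [extNat]

lemma memH_bound {u : ℕ → ℂ} (hu : memH u) : ∃ C : ℝ, 0 ≤ C ∧ ∀ m : ℤ, ‖ext u m‖ ≤ C := by
  have h := memH_summable_int hu
  refine ⟨Real.sqrt (∑' m : ℤ, ‖ext u m‖^2), Real.sqrt_nonneg _, fun m => ?_⟩
  have h1 : ‖ext u m‖^2 ≤ ∑' m : ℤ, ‖ext u m‖^2 :=
    Summable.le_tsum h m (fun j _ => by positivity)
  calc ‖ext u m‖ = Real.sqrt (‖ext u m‖^2) := by rw [Real.sqrt_sq (norm_nonneg _)]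
    _ ≤ _ := Real.sqrt_le_sqrt h1

lemma memV_summable_int {k₀ : ℝ} {u : ℕ → ℂ} (hu : memV k₀ u) :
    Summable fun m : ℤ => (kseq k₀ m * ‖ext u m‖)^2 := by
  rw [← summable_int_iff _ (fun m hm => by rw [ext_nonpos u hm]; simp)]
  apply hu.2.congr
  intro n
  rw [extNat]
  ring

/-- The four monomial pieces of `Re((B(a,b))_m conj(c_m))`, as functions on `ℤ`. -/
def T1 (k₀ : ℝ) (a b c : ℕ → ℂ) (m : ℤ) : ℝ :=
  (Complex.I * (kseq k₀ m : ℝ) * ((1/4 : ℂ) * conj (ext b (m-1)) * conj (ext a (m+1)))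
    * conj (ext c m)).re
def T2 (k₀ : ℝ) (a b c : ℕ → ℂ) (m : ℤ) : ℝ :=
  (-(Complex.I * (kseq k₀ m : ℝ) * ((1/2 : ℂ) * conj (ext a (m+1)) * conj (ext b (m+2))))
    * conj (ext c m)).re
def T3 (k₀ : ℝ) (a b c : ℕ → ℂ) (m : ℤ) : ℝ :=
  (-(Complex.I * (kseq k₀ m : ℝ) * ((1/2 : ℂ) * conj (ext b (m+1)) * conj (ext a (m+2))))
    * conj (ext c m)).re
def T4 (k₀ : ℝ) (a b c : ℕ → ℂ) (m : ℤ) : ℝ :=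
  (Complex.I * (kseq k₀ m : ℝ) * ((1/8 : ℂ) * conj (ext a (m-1)) * conj (ext b (m-2)))
    * conj (ext c m)).re

lemma T2_pair (k₀ : ℝ) (a b c : ℕ → ℂ) (m : ℤ) :
    T4 k₀ a c b (m + 2) = - T2 k₀ a b c m := by
  unfold T2 T4
  rw [kseq_shift]
  have h1 : m + 2 - 1 = m + 1 := by ring
  have h2 : m + 2 - 2 = m := by ring
  rw [h1, h2, ← Complex.neg_re]
  congr 1
  push_cast
  ring

lemma T3_pair (k₀ : ℝ) (a b c : ℕ → ℂ) (m : ℤ) :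
    T1 k₀ a c b (m + 1) = - T3 k₀ a b c m := by
  unfold T1 T3
  rw [kseq_shift]
  have h1 : m + 1 - 1 = m := by ring
  rw [h1, ← Complex.neg_re]
  congr 1
  push_cast
  ring

lemma T_zero (k₀ : ℝ) (a b c : ℕ → ℂ) {m : ℤ} (hm : m ≤ 0) :
    T1 k₀ a b c m = 0 ∧ T2 k₀ a b c m = 0 ∧ T3 k₀ a b c m = 0 ∧ T4 k₀ a b c m = 0 := by
  refine ⟨?_, ?_, ?_, ?_⟩ <;> simp [T1, T2, T3, T4, ext_nonpos c hm]

/-- Sum of the four pieces. -/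
def S4 (k₀ : ℝ) (a b c : ℕ → ℂ) (m : ℤ) : ℝ :=
  T1 k₀ a b c m + T2 k₀ a b c m + T3 k₀ a b c m + T4 k₀ a b c m

lemma S4_zero (k₀ : ℝ) (a b c : ℕ → ℂ) {m : ℤ} (hm : m ≤ 0) : S4 k₀ a b c m = 0 := by
  obtain ⟨h1, h2, h3, h4⟩ := T_zero k₀ a b c hm
  simp [S4, h1, h2, h3, h4]

lemma goyB_decomp (k₀ : ℝ) (a b c : ℕ → ℂ) (n : ℕ) :
    (goyB k₀ a b (n+1) * conj (c (n+1))).re = S4 k₀ a b c ((n:ℤ)+1) := by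
  have hc : c (n+1) = ext c ((n:ℤ)+1) := (extNat c n).symm
  rw [hc]
  unfold S4 T1 T2 T3 T4 goyB
  have hm : ((n+1:ℕ) : ℤ) = (n:ℤ)+1 := by push_cast; ring
  rw [hm]
  rw [← Complex.add_re, ← Complex.add_re, ← Complex.add_re]
  congr 1
  ring_nf

section Bounds
variable {k₀ : ℝ} (hk₀ : 0 < k₀) (a b c : ℕ → ℂ) (m : ℤ)
include hk₀

lemma T1_bound :
    |T1 k₀ a b c m| ≤ kseq k₀ m * ‖ext a (m+1)‖ * ‖ext b (m-1)‖ * ‖ext c m‖ := by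
  refine (Complex.abs_re_le_norm _).trans ?_
  simp only [norm_mul]
  simp only [Complex.norm_I, Complex.norm_real, RCLike.norm_conj, one_mul, Real.norm_eq_abs]
  have hk : |kseq k₀ m| = kseq k₀ m := abs_of_pos (kseq_pos' hk₀ m)
  rw [hk]
  have h4 : ‖(1/4 : ℂ)‖ = 1/4 := by norm_num
  rw [h4]
  have hA := norm_nonneg (ext a (m+1)); have hB := norm_nonneg (ext b (m-1))
  have hC := norm_nonneg (ext c m)
  have hk' : (0:ℝ) < kseq k₀ m := kseq_pos' hk₀ m
  nlinarith [mul_nonneg (mul_nonneg (mul_nonneg hk'.le hA) hB) hC]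

lemma T2_bound :
    |T2 k₀ a b c m| ≤ kseq k₀ m * ‖ext a (m+1)‖ * ‖ext b (m+2)‖ * ‖ext c m‖ := by
  unfold T2
  rw [neg_mul, Complex.neg_re, abs_neg]
  refine (Complex.abs_re_le_norm _).trans ?_
  simp only [norm_mul]
  simp only [Complex.norm_I, Complex.norm_real, RCLike.norm_conj, one_mul, Real.norm_eq_abs]
  have hk : |kseq k₀ m| = kseq k₀ m := abs_of_pos (kseq_pos' hk₀ m)
  rw [hk]
  have h4 : ‖(1/2 : ℂ)‖ = 1/2 := by norm_num
  rw [h4]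
  have hA := norm_nonneg (ext a (m+1)); have hB := norm_nonneg (ext b (m+2))
  have hC := norm_nonneg (ext c m)
  have hk' : (0:ℝ) < kseq k₀ m := kseq_pos' hk₀ m
  nlinarith [mul_nonneg (mul_nonneg (mul_nonneg hk'.le hA) hB) hC]

lemma T3_bound :
    |T3 k₀ a b c m| ≤ kseq k₀ m * ‖ext a (m+2)‖ * ‖ext b (m+1)‖ * ‖ext c m‖ := by
  unfold T3
  rw [neg_mul, Complex.neg_re, abs_neg]
  refine (Complex.abs_re_le_norm _).trans ?_
  simp only [norm_mul]
  simp only [Complex.norm_I, Complex.norm_real, RCLike.norm_conj, one_mul, Real.norm_eq_abs]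
  have hk : |kseq k₀ m| = kseq k₀ m := abs_of_pos (kseq_pos' hk₀ m)
  rw [hk]
  have h4 : ‖(1/2 : ℂ)‖ = 1/2 := by norm_num
  rw [h4]
  have hA := norm_nonneg (ext a (m+2)); have hB := norm_nonneg (ext b (m+1))
  have hC := norm_nonneg (ext c m)
  have hk' : (0:ℝ) < kseq k₀ m := kseq_pos' hk₀ m
  nlinarith [mul_nonneg (mul_nonneg (mul_nonneg hk'.le hA) hB) hC]

lemma T4_bound :
    |T4 k₀ a b c m| ≤ kseq k₀ m * ‖ext a (m-1)‖ * ‖ext b (m-2)‖ * ‖ext c m‖ := by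
  refine (Complex.abs_re_le_norm _).trans ?_
  simp only [norm_mul]
  simp only [Complex.norm_I, Complex.norm_real, RCLike.norm_conj, one_mul, Real.norm_eq_abs]
  have hk : |kseq k₀ m| = kseq k₀ m := abs_of_pos (kseq_pos' hk₀ m)
  rw [hk]
  have h4 : ‖(1/8 : ℂ)‖ = 1/8 := by norm_num
  rw [h4]
  have hA := norm_nonneg (ext a (m-1)); have hB := norm_nonneg (ext b (m-2))
  have hC := norm_nonneg (ext c m)
  have hk' : (0:ℝ) < kseq k₀ m := kseq_pos' hk₀ m
  nlinarith [mul_nonneg (mul_nonneg (mul_nonneg hk'.le hA) hB) hC]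

end Bounds

/-- The combined hypothesis used for summability. -/
def Hyp (k₀ : ℝ) (a b c : ℕ → ℂ) : Prop :=
  (memV k₀ a ∧ memH b ∧ memH c) ∨ (memH a ∧ memV k₀ b ∧ memV k₀ c)

lemma summable_of_T_bound {k₀ : ℝ} (hk₀ : 0 < k₀) {a b c : ℕ → ℂ} {f : ℤ → ℝ}
    {da db : ℤ} (hda : -2 ≤ da) (hdb : -2 ≤ db)
    (hb : ∀ m : ℤ, |f m| ≤ kseq k₀ m * ‖ext a (m+da)‖ * ‖ext b (m+db)‖ * ‖ext c m‖)
    (H : Hyp k₀ a b c) : Summable f := by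
  rcases H with ⟨ha, hbH, hcH⟩ | ⟨haH, hbV, hcV⟩
  · -- a ∈ V, b, c ∈ H
    obtain ⟨Cb, hCb0, hCb⟩ := memH_bound hbH
    have hsA : Summable (fun m : ℤ => (kseq k₀ m * ‖ext a m‖)^2) := memV_summable_int ha
    have hsC : Summable (fun m : ℤ => ‖ext c m‖^2) := memH_summable_int hcH
    have hkey : Summable (fun m : ℤ =>
        (4*Cb) * ((kseq k₀ (m+da) * ‖ext a (m+da)‖) * ‖ext c m‖)) :=
      (summable_mul_shift _ _ hsA hsC da).mul_left _
    apply Summable.of_norm_bounded hkey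
    intro m
    rw [Real.norm_eq_abs]
    refine (hb m).trans ?_
    have h1 : kseq k₀ m ≤ 4 * kseq k₀ (m + da) := kseq_le hk₀ hda m
    have h2 : ‖ext b (m+db)‖ ≤ Cb := hCb _
    have hA := norm_nonneg (ext a (m+da)); have hB := norm_nonneg (ext b (m+db))
    have hC := norm_nonneg (ext c m)
    have hk1 : (0:ℝ) < kseq k₀ m := kseq_pos' hk₀ m
    have hk2 : (0:ℝ) < kseq k₀ (m+da) := kseq_pos' hk₀ _
    nlinarith [mul_nonneg (mul_nonneg hA hC) hk1.le, mul_nonneg (mul_nonneg hA hC) hk2.le,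
      mul_nonneg hA hC, mul_le_mul_of_nonneg_left h2 (mul_nonneg (mul_nonneg hk1.le hA) hC),
      mul_le_mul_of_nonneg_right h1 (mul_nonneg (mul_nonneg hA hC) hCb0)]
  · -- a ∈ H, b, c ∈ V
    obtain ⟨Ca, hCa0, hCa⟩ := memH_bound haH
    have hsB : Summable (fun m : ℤ => (kseq k₀ m * ‖ext b m‖)^2) := memV_summable_int hbV
    have hsC : Summable (fun m : ℤ => ‖ext c m‖^2) := memH_summable_int hcV.1
    have hkey : Summable (fun m : ℤ =>
        (4*Ca) * ((kseq k₀ (m+db) * ‖ext b (m+db)‖) * ‖ext c m‖)) :=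
      (summable_mul_shift _ _ hsB hsC db).mul_left _
    apply Summable.of_norm_bounded hkey
    intro m
    rw [Real.norm_eq_abs]
    refine (hb m).trans ?_
    have h1 : kseq k₀ m ≤ 4 * kseq k₀ (m + db) := kseq_le hk₀ hdb m
    have h2 : ‖ext a (m+da)‖ ≤ Ca := hCa _
    have hA := norm_nonneg (ext a (m+da)); have hB := norm_nonneg (ext b (m+db))
    have hC := norm_nonneg (ext c m)
    have hk1 : (0:ℝ) < kseq k₀ m := kseq_pos' hk₀ m
    have hk2 : (0:ℝ) < kseq k₀ (m+db) := kseq_pos' hk₀ _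
    nlinarith [mul_nonneg (mul_nonneg hB hC) hk1.le, mul_nonneg (mul_nonneg hB hC) hk2.le,
      mul_nonneg hB hC, mul_le_mul_of_nonneg_left h2 (mul_nonneg (mul_nonneg hk1.le hB) hC),
      mul_le_mul_of_nonneg_right h1 (mul_nonneg (mul_nonneg hB hC) hCa0)]

section Sums
variable {k₀ : ℝ} (hk₀ : 0 < k₀) {a b c : ℕ → ℂ} (H : Hyp k₀ a b c)

include hk₀ H

lemma summable_T1 : Summable (T1 k₀ a b c) :=
  summable_of_T_bound hk₀ (da := 1) (db := -1) (by norm_num) (by norm_num)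
    (fun m => T1_bound hk₀ a b c m) H

lemma summable_T2 : Summable (T2 k₀ a b c) :=
  summable_of_T_bound hk₀ (da := 1) (db := 2) (by norm_num) (by norm_num)
    (fun m => T2_bound hk₀ a b c m) H

lemma summable_T3 : Summable (T3 k₀ a b c) :=
  summable_of_T_bound hk₀ (da := 2) (db := 1) (by norm_num) (by norm_num)
    (fun m => T3_bound hk₀ a b c m) H

lemma summable_T4 : Summable (T4 k₀ a b c) :=
  summable_of_T_bound hk₀ (da := -1) (db := -2) (by norm_num) (by norm_num)
    (fun m => T4_bound hk₀ a b c m) H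

lemma summable_S4 : Summable (S4 k₀ a b c) :=
  ((((summable_T1 hk₀ H).add (summable_T2 hk₀ H)).add (summable_T3 hk₀ H)).add
    (summable_T4 hk₀ H)).congr (fun m => by simp [S4])

lemma summable_inner : Summable (fun n : ℕ => (goyB k₀ a b (n+1) * conj (c (n+1))).re) := by
  have h : Summable (fun n : ℕ => S4 k₀ a b c ((n:ℤ)+1)) := by
    rw [summable_int_iff (S4 k₀ a b c) (fun m hm => S4_zero k₀ a b c hm)]
    exact summable_S4 hk₀ H
  exact h.congr (fun n => (goyB_decomp k₀ a b c n).symm)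

lemma innerH_goyB_eq :
    innerH (goyB k₀ a b) c = (∑' m : ℤ, T1 k₀ a b c m) + (∑' m : ℤ, T2 k₀ a b c m)
      + (∑' m : ℤ, T3 k₀ a b c m) + (∑' m : ℤ, T4 k₀ a b c m) := by
  unfold innerH
  have h1 : ∀ n : ℕ, (goyB k₀ a b (n+1) * conj (c (n+1))).re = S4 k₀ a b c ((n:ℤ)+1) :=
    fun n => goyB_decomp k₀ a b c n
  rw [tsum_congr h1]
  rw [tsum_int_eq (S4 k₀ a b c) (fun m hm => S4_zero k₀ a b c hm)]
  unfold S4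
  rw [Summable.tsum_add (((summable_T1 hk₀ H).add (summable_T2 hk₀ H)).add (summable_T3 hk₀ H))
    (summable_T4 hk₀ H)]
  rw [Summable.tsum_add ((summable_T1 hk₀ H).add (summable_T2 hk₀ H)) (summable_T3 hk₀ H)]
  rw [Summable.tsum_add (summable_T1 hk₀ H) (summable_T2 hk₀ H)]

end Sums

lemma Hyp_swap {k₀ : ℝ} {a b c : ℕ → ℂ} (H : Hyp k₀ a b c) : Hyp k₀ a c b := by
  rcases H with ⟨h1, h2, h3⟩ | ⟨h1, h2, h3⟩
  · exact Or.inl ⟨h1, h3, h2⟩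
  · exact Or.inr ⟨h1, h3, h2⟩

/-- The core skew-symmetry identity for the scalar GOY operator. -/
lemma goyB_skew {k₀ : ℝ} (hk₀ : 0 < k₀) {a b c : ℕ → ℂ} (H : Hyp k₀ a b c) :
    innerH (goyB k₀ a b) c + innerH (goyB k₀ a c) b = 0 := by
  have H' : Hyp k₀ a c b := Hyp_swap H
  rw [innerH_goyB_eq hk₀ H, innerH_goyB_eq hk₀ H']
  have e24 : ∑' m : ℤ, T4 k₀ a c b m = - ∑' m : ℤ, T2 k₀ a b c m := by
    rw [← tsum_shift' (T4 k₀ a c b) 2, ← tsum_neg]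
    exact tsum_congr (fun m => T2_pair k₀ a b c m)
  have e13 : ∑' m : ℤ, T1 k₀ a c b m = - ∑' m : ℤ, T3 k₀ a b c m := by
    rw [← tsum_shift' (T1 k₀ a c b) 1, ← tsum_neg]
    exact tsum_congr (fun m => T3_pair k₀ a b c m)
  have e24' : ∑' m : ℤ, T4 k₀ a b c m = - ∑' m : ℤ, T2 k₀ a c b m := by
    rw [← tsum_shift' (T4 k₀ a b c) 2, ← tsum_neg]
    exact tsum_congr (fun m => T2_pair k₀ a c b m)
  have e13' : ∑' m : ℤ, T1 k₀ a b c m = - ∑' m : ℤ, T3 k₀ a c b m := by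
    rw [← tsum_shift' (T1 k₀ a b c) 1, ← tsum_neg]
    exact tsum_congr (fun m => T3_pair k₀ a c b m)
  rw [e24, e13, e24', e13']
  ring

/-- Linearity of `innerH` in the first slot for the relevant combination. -/
lemma innerH_add_mul (lam : ℝ) (f g w : ℕ → ℂ)
    (hf : Summable (fun n : ℕ => (f (n+1) * conj (w (n+1))).re))
    (hg : Summable (fun n : ℕ => (g (n+1) * conj (w (n+1))).re)) :
    innerH (fun n => f n + (lam : ℂ) * g n) w = innerH f w + lam * innerH g w := by
  unfold innerH
  have hpt : ∀ n : ℕ, ((f (n+1) + (lam:ℂ) * g (n+1)) * conj (w (n+1))).re =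
      (f (n+1) * conj (w (n+1))).re + lam * (g (n+1) * conj (w (n+1))).re := by
    intro n
    rw [add_mul, Complex.add_re, mul_assoc]
    congr 1
    simp [Complex.mul_re]
  rw [tsum_congr hpt, Summable.tsum_add hf (hg.mul_left lam), tsum_mul_left]

end GOYAux

/-- `⟨B̃_λ(u,v), v⟩_{H̃} = 0` for `u ∈ Ṽ, v ∈ H̃` and for `v ∈ Ṽ, u ∈ H̃`; moreover
`⟨B̃_λ(u,v), w⟩_{H̃} = −⟨B̃_λ(u,w), v⟩_{H̃}` for `u ∈ Ṽ`, `v, w ∈ H̃`, and for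
`v, w ∈ Ṽ`, `u ∈ H̃`. -/
theorem Btilde_energy_and_skew_symmetry (k₀ lam : ℝ) (hk₀ : 0 < k₀) :
    (∀ u v : (ℕ → ℂ) × (ℕ → ℂ),
      (memVt k₀ u ∧ memHt v) ∨ (memVt k₀ v ∧ memHt u) →
      innerHt (Btilde k₀ lam u v) v = 0) ∧
    (∀ u v w : (ℕ → ℂ) × (ℕ → ℂ),
      (memVt k₀ u ∧ memHt v ∧ memHt w) ∨ (memVt k₀ v ∧ memVt k₀ w ∧ memHt u) →
      innerHt (Btilde k₀ lam u v) w = - innerHt (Btilde k₀ lam u w) v) := by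
  have main : ∀ u v w : (ℕ → ℂ) × (ℕ → ℂ),
      (memVt k₀ u ∧ memHt v ∧ memHt w) ∨ (memVt k₀ v ∧ memVt k₀ w ∧ memHt u) →
      innerHt (Btilde k₀ lam u v) w = - innerHt (Btilde k₀ lam u w) v := by
    intro u v w h
    have H1 : GOYAux.Hyp k₀ u.1 v.1 w.1 := by
      rcases h with ⟨hu, hv, hw⟩ | ⟨hv, hw, hu⟩
      · exact Or.inl ⟨hu.1, hv.1, hw.1⟩
      · exact Or.inr ⟨hu.1, hv.1, hw.1⟩
    have H2 : GOYAux.Hyp k₀ u.2 v.1 w.1 := by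
      rcases h with ⟨hu, hv, hw⟩ | ⟨hv, hw, hu⟩
      · exact Or.inl ⟨hu.2, hv.1, hw.1⟩
      · exact Or.inr ⟨hu.2, hv.1, hw.1⟩
    have H3 : GOYAux.Hyp k₀ u.1 v.2 w.2 := by
      rcases h with ⟨hu, hv, hw⟩ | ⟨hv, hw, hu⟩
      · exact Or.inl ⟨hu.1, hv.2, hw.2⟩
      · exact Or.inr ⟨hu.1, hv.2, hw.2⟩
    have H4 : GOYAux.Hyp k₀ u.2 v.2 w.2 := by
      rcases h with ⟨hu, hv, hw⟩ | ⟨hv, hw, hu⟩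
      · exact Or.inl ⟨hu.2, hv.2, hw.2⟩
      · exact Or.inr ⟨hu.2, hv.2, hw.2⟩
    have H1' := GOYAux.Hyp_swap H1
    have H2' := GOYAux.Hyp_swap H2
    have H3' := GOYAux.Hyp_swap H3
    have H4' := GOYAux.Hyp_swap H4
    have expand : ∀ (y z : (ℕ → ℂ) × (ℕ → ℂ)),
        GOYAux.Hyp k₀ u.1 y.1 z.1 → GOYAux.Hyp k₀ u.2 y.1 z.1 →
        GOYAux.Hyp k₀ u.1 y.2 z.2 → GOYAux.Hyp k₀ u.2 y.2 z.2 →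
        innerHt (Btilde k₀ lam u y) z =
          (innerH (goyB k₀ u.1 y.1) z.1 + lam * innerH (goyB k₀ u.2 y.1) z.1)
          + (innerH (goyB k₀ u.1 y.2) z.2 + lam * innerH (goyB k₀ u.2 y.2) z.2) := by
      intro y z G1 G2 G3 G4
      show innerH (fun n => goyB k₀ u.1 y.1 n + (lam:ℂ) * goyB k₀ u.2 y.1 n) z.1
          + innerH (fun n => goyB k₀ u.1 y.2 n + (lam:ℂ) * goyB k₀ u.2 y.2 n) z.2 = _
      rw [GOYAux.innerH_add_mul lam _ _ _ (GOYAux.summable_inner hk₀ G1)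
        (GOYAux.summable_inner hk₀ G2),
        GOYAux.innerH_add_mul lam _ _ _ (GOYAux.summable_inner hk₀ G3)
        (GOYAux.summable_inner hk₀ G4)]
    rw [expand v w H1 H2 H3 H4, expand w v H1' H2' H3' H4']
    have s1 := GOYAux.goyB_skew hk₀ H1
    have s2 := GOYAux.goyB_skew hk₀ H2
    have s3 := GOYAux.goyB_skew hk₀ H3
    have s4 := GOYAux.goyB_skew hk₀ H4
    linear_combination s1 + lam * s2 + s3 + lam * s4
  constructor
  · intro u v h
    have h' : (memVt k₀ u ∧ memHt v ∧ memHt v) ∨ (memVt k₀ v ∧ memVt k₀ v ∧ memHt u) := by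
      rcases h with ⟨hu, hv⟩ | ⟨hv, hu⟩
      · exact Or.inl ⟨hu, hv, hv⟩
      · exact Or.inr ⟨hv, hv, hu⟩
    have := main u v v h'
    linarith
  · exact main

end
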